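/- Let d ≥ 1, let 1 < p ≤ 2, and let x ∈ ℝ^d have all coordinates nonzero. Define the diagonal matrix Λ_(p) = diag((|x_1|/‖x‖_p)^{p−2}, …, (|x_d|/‖x‖_p)^{p−2}) and the vector x_(p) = ‖x‖_p^{1−p}·(|x_1|^{p−1}·sgn(x_1), …, |x_d|^{p−1}·sgn(x_d))ᵀ. Then, in the positive semidefinite order, Λ_(p) − x_(p)·x_(p)ᵀ ⪰ d^{−(2−p)/p}·(I_d − x·xᵀ/‖x‖₂²); in particular Λ_(p) − x_(p)·x_(p)ᵀ is positive semidefinite. -/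

import Mathlib

open Matrix

/-- The `ℓ_p` norm of a vector in `ℝ^d`. -/
noncomputable def lpNorm (d : ℕ) (p : ℝ) (x : Fin d → ℝ) : ℝ :=
  (∑ i, |x i| ^ p) ^ (1 / p)

/-- The vector `x_(p) = ‖x‖_p^{1−p}·(|x_i|^{p−1}·sgn(x_i))_i`. -/
noncomputable def xP (d : ℕ) (p : ℝ) (x : Fin d → ℝ) : Fin d → ℝ :=
  fun i => lpNorm d p x ^ (1 - p) * (|x i| ^ (p - 1) * Real.sign (x i))

/-- The diagonal matrix `Λ_(p) = diag((|x_i|/‖x‖_p)^{p−2})_i`. -/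
noncomputable def lamP (d : ℕ) (p : ℝ) (x : Fin d → ℝ) : Matrix (Fin d) (Fin d) ℝ :=
  Matrix.diagonal fun i => (|x i| / lpNorm d p x) ^ (p - 2)

lemma sign_mul_abs' {x : ℝ} (hx : x ≠ 0) : Real.sign x * |x| = x := by
  rcases hx.lt_or_gt with h | h
  · rw [Real.sign_of_neg h, abs_of_neg h]; ring
  · rw [Real.sign_of_pos h, abs_of_pos h]; ring

lemma sign_mul_self' {x : ℝ} (hx : x ≠ 0) : Real.sign x * x = |x| := by
  rcases hx.lt_or_gt with h | h
  · rw [Real.sign_of_neg h, abs_of_neg h]; ring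
  · rw [Real.sign_of_pos h, abs_of_pos h]; ring

lemma quad_diag {d : ℕ} (f y : Fin d → ℝ) :
    y ⬝ᵥ (Matrix.diagonal f *ᵥ y) = ∑ i, f i * y i ^ 2 := by
  simp [dotProduct, Matrix.mulVec_diagonal]
  exact Finset.sum_congr rfl fun i _ => by ring

lemma quad_vmv {d : ℕ} (a y : Fin d → ℝ) :
    y ⬝ᵥ (Matrix.vecMulVec a a *ᵥ y) = (∑ i, a i * y i) ^ 2 := by
  simp only [dotProduct, Matrix.mulVec, Matrix.vecMulVec_apply, sq, Finset.sum_mul_sum]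
  refine Finset.sum_congr rfl fun i _ => ?_
  simp only [dotProduct, Finset.mul_sum]
  exact Finset.sum_congr rfl fun j _ => by ring

lemma herm_vmv {d : ℕ} (a : Fin d → ℝ) : (Matrix.vecMulVec a a).IsHermitian := by
  ext i j
  simp [Matrix.conjTranspose_apply, Matrix.vecMulVec_apply, mul_comm]

lemma herm_smul {d : ℕ} (c : ℝ) {A : Matrix (Fin d) (Fin d) ℝ} (hA : A.IsHermitian) :
    (c • A).IsHermitian := by
  rw [Matrix.IsHermitian, Matrix.conjTranspose_smul, hA.eq, star_trivial]

lemma core_ineq {d : ℕ} (lam u v : Fin d → ℝ) (N c : ℝ) (hN : 0 < N)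
    (hlam : ∀ i, 1 ≤ lam i) (hrel : ∀ i, lam i * v i = N * u i)
    (huv : ∑ i, u i * v i = N) (hV : 0 < ∑ i, v i ^ 2)
    (hc1 : c ≤ 1) (y : Fin d → ℝ) :
    c * ((∑ i, y i ^ 2) - (∑ i, v i * y i) ^ 2 / (∑ i, v i ^ 2))
      ≤ (∑ i, lam i * y i ^ 2) - (∑ i, u i * y i) ^ 2 := by
  set S := ∑ i, u i * y i with hS
  set T := ∑ i, v i * y i with hT
  set V := ∑ i, v i ^ 2 with hVdef
  have hNne : N ≠ 0 := hN.ne'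
  have hVne : V ≠ 0 := hV.ne'
  have expand : ∀ (g : Fin d → ℝ) (s : ℝ),
      ∑ i, g i * (y i - s * v i) ^ 2
        = (∑ i, g i * y i ^ 2) - 2 * s * (∑ i, g i * (v i * y i))
            + s ^ 2 * (∑ i, g i * v i ^ 2) := by
    intro g s
    rw [Finset.mul_sum, Finset.mul_sum, ← Finset.sum_sub_distrib, ← Finset.sum_add_distrib]
    exact Finset.sum_congr rfl fun i _ => by ring
  have h1 : ∑ i, lam i * (v i * y i) = N * S := by
    rw [hS, Finset.mul_sum]
    exact Finset.sum_congr rfl fun i _ => by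
      rw [← mul_assoc, hrel i]; ring
  have h2 : ∑ i, lam i * v i ^ 2 = N ^ 2 := by
    have : ∑ i, lam i * v i ^ 2 = N * ∑ i, u i * v i := by
      rw [Finset.mul_sum]
      exact Finset.sum_congr rfl fun i _ => by
        rw [sq, ← mul_assoc, hrel i]; ring
    rw [this, huv, sq]
  set t := S / N with ht
  have key : (∑ i, lam i * y i ^ 2) - S ^ 2 = ∑ i, lam i * (y i - t * v i) ^ 2 := by
    rw [expand, h1, h2, ht]
    field_simp
    ring
  have step1 : ∑ i, (1:ℝ) * (y i - t * v i) ^ 2 ≤ ∑ i, lam i * (y i - t * v i) ^ 2 :=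
    Finset.sum_le_sum fun i _ =>
      mul_le_mul_of_nonneg_right (hlam i) (sq_nonneg _)
  have step2 : ∀ s : ℝ, (∑ i, y i ^ 2) - T ^ 2 / V ≤ ∑ i, (1:ℝ) * (y i - s * v i) ^ 2 := by
    intro s
    rw [expand]
    simp only [one_mul]
    have e : s ^ 2 * V - 2 * s * T + T ^ 2 / V = (s * V - T) ^ 2 / V := by
      field_simp; ring
    have hnn : 0 ≤ (s * V - T) ^ 2 / V := div_nonneg (sq_nonneg _) hV.le
    nlinarith [e, hnn]
  have rhs0 : 0 ≤ (∑ i, y i ^ 2) - T ^ 2 / V := by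
    have hpos : 0 ≤ ∑ i, (1:ℝ) * (y i - (T / V) * v i) ^ 2 :=
      Finset.sum_nonneg fun i _ => by positivity
    have e2 : ∑ i, (1:ℝ) * (y i - (T / V) * v i) ^ 2 = (∑ i, y i ^ 2) - T ^ 2 / V := by
      rw [expand]
      simp only [one_mul]
      field_simp
      ring
    linarith [e2 ▸ hpos]
  calc c * ((∑ i, y i ^ 2) - T ^ 2 / V)
      ≤ 1 * ((∑ i, y i ^ 2) - T ^ 2 / V) := mul_le_mul_of_nonneg_right hc1 rhs0
    _ = (∑ i, y i ^ 2) - T ^ 2 / V := one_mul _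
    _ ≤ ∑ i, (1:ℝ) * (y i - t * v i) ^ 2 := step2 t
    _ ≤ ∑ i, lam i * (y i - t * v i) ^ 2 := step1
    _ = (∑ i, lam i * y i ^ 2) - S ^ 2 := key.symm

/-- For `1 < p ≤ 2` and `x ∈ ℝ^d` with all coordinates nonzero,
`Λ_(p) − x_(p) x_(p)ᵀ ⪰ d^{−(2−p)/p}·(I − x xᵀ/‖x‖₂²)`; in particular
`Λ_(p) − x_(p) x_(p)ᵀ` is positive semidefinite. -/
theorem stmt_13 (d : ℕ) (hd : 1 ≤ d) (p : ℝ) (hp1 : 1 < p) (hp2 : p ≤ 2)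
    (x : Fin d → ℝ) (hx : ∀ i, x i ≠ 0) :
    Matrix.PosSemidef
      (lamP d p x - Matrix.vecMulVec (xP d p x) (xP d p x) -
        ((d : ℝ) ^ (-(2 - p) / p)) •
          ((1 : Matrix (Fin d) (Fin d) ℝ) - (∑ i, x i ^ 2)⁻¹ • Matrix.vecMulVec x x)) ∧
    Matrix.PosSemidef (lamP d p x - Matrix.vecMulVec (xP d p x) (xP d p x)) := by
  have hp0 : 0 < p := lt_trans one_pos hp1
  have hpne : p ≠ 0 := hp0.ne'
  set N := lpNorm d p x with hNdef
  set u := xP d p x with hudef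
  set lam : Fin d → ℝ := fun i => (|x i| / N) ^ (p - 2) with hlamdef
  set c : ℝ := (d : ℝ) ^ (-(2 - p) / p) with hcdef
  have hne : Nonempty (Fin d) := ⟨⟨0, hd⟩⟩
  have habs : ∀ i, (0:ℝ) < |x i| := fun i => abs_pos.2 (hx i)
  set Ssum := ∑ i, |x i| ^ p with hSdef
  have hS : 0 < Ssum :=
    Finset.sum_pos (fun i _ => Real.rpow_pos_of_pos (habs i) p) Finset.univ_nonempty
  have hN : 0 < N := Real.rpow_pos_of_pos hS _
  have hNp : N ^ p = Ssum := by
    rw [hNdef, lpNorm, ← hSdef, ← Real.rpow_mul hS.le, one_div, inv_mul_cancel₀ hpne,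
      Real.rpow_one]
  have hxleN : ∀ i, |x i| ≤ N := by
    intro i
    have h1 : |x i| ^ p ≤ Ssum := by
      rw [hSdef]
      exact Finset.single_le_sum (fun j _ => (Real.rpow_pos_of_pos (habs j) p).le)
        (Finset.mem_univ i)
    have h2 : (|x i| ^ p) ^ (1 / p) ≤ Ssum ^ (1 / p) :=
      Real.rpow_le_rpow (Real.rpow_pos_of_pos (habs i) p).le h1 (by positivity)
    rwa [← Real.rpow_mul (abs_nonneg _), mul_one_div, div_self hpne, Real.rpow_one] at h2
  have hlam : ∀ i, 1 ≤ lam i := fun i =>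
    Real.one_le_rpow_of_pos_of_le_one_of_nonpos
      (div_pos (habs i) hN) (div_le_one_of_le₀ (hxleN i) hN.le) (by linarith)
  have hNp2 : (0:ℝ) < N ^ (p - 2) := Real.rpow_pos_of_pos hN _
  have hrel : ∀ i, lam i * x i = N * u i := by
    intro i
    have ha := habs i
    have hA1 : |x i| ^ (p - 2) * |x i| = |x i| ^ (p - 1) := by
      rw [← Real.rpow_add_one ha.ne' (p - 2)]
      congr 1; ring
    have hN2 : N ^ (2 - p) * N ^ (p - 2) = 1 := by
      rw [← Real.rpow_add hN]
      norm_num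
    have hN1 : N * N ^ (1 - p) = N ^ (2 - p) := by
      rw [mul_comm, ← Real.rpow_add_one hN.ne']
      congr 1; ring
    have hsx : Real.sign (x i) * |x i| = x i := sign_mul_abs' (hx i)
    show (|x i| / N) ^ (p - 2) * x i
        = N * (N ^ (1 - p) * (|x i| ^ (p - 1) * Real.sign (x i)))
    rw [Real.div_rpow (abs_nonneg _) hN.le, ← mul_assoc N, hN1,
      div_mul_eq_mul_div, div_eq_iff hNp2.ne']
    calc |x i| ^ (p - 2) * x i
        = (|x i| ^ (p - 2) * |x i|) * Real.sign (x i) := by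
          rw [mul_assoc, mul_comm (|x i|) (Real.sign (x i)), hsx]
      _ = |x i| ^ (p - 1) * Real.sign (x i) := by rw [hA1]
      _ = N ^ (2 - p) * (|x i| ^ (p - 1) * Real.sign (x i)) * N ^ (p - 2) := by
          rw [mul_comm (N ^ (2 - p)) _, mul_assoc, hN2, mul_one]
  have huv : ∑ i, u i * x i = N := by
    have e : ∀ i, u i * x i = N ^ (1 - p) * |x i| ^ p := by
      intro i
      have ha := habs i
      have hA2 : |x i| ^ (p - 1) * |x i| = |x i| ^ p := by
        rw [← Real.rpow_add_one ha.ne' (p - 1)]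
        congr 1; ring
      show N ^ (1 - p) * (|x i| ^ (p - 1) * Real.sign (x i)) * x i
          = N ^ (1 - p) * |x i| ^ p
      rw [mul_assoc, mul_assoc, sign_mul_self' (hx i), hA2]
    rw [Finset.sum_congr rfl fun i _ => e i, ← Finset.mul_sum, ← hSdef, ← hNp,
      ← Real.rpow_add hN]
    norm_num
  have hV : 0 < ∑ i, x i ^ 2 :=
    Finset.sum_pos (fun i _ => by have := hx i; positivity) Finset.univ_nonempty
  have hc1 : c ≤ 1 :=
    Real.rpow_le_one_of_one_le_of_nonpos (by exact_mod_cast hd)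
      (div_nonpos_of_nonpos_of_nonneg (by linarith) hp0.le)
  -- Hermitian parts
  have herm1 : (lamP d p x).IsHermitian := by
    simp only [lamP]
    exact Matrix.isHermitian_diagonal _
  have hermA : (lamP d p x - Matrix.vecMulVec u u).IsHermitian :=
    herm1.sub (herm_vmv u)
  have hermB : ((1 : Matrix (Fin d) (Fin d) ℝ)
      - (∑ i, x i ^ 2)⁻¹ • Matrix.vecMulVec x x).IsHermitian :=
    Matrix.isHermitian_one.sub (herm_smul _ (herm_vmv x))
  have hself : ∀ y : Fin d → ℝ, y ⬝ᵥ y = ∑ i, y i ^ 2 := by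
    intro y; simp [dotProduct, sq]
  have quad : ∀ y : Fin d → ℝ,
      y ⬝ᵥ ((lamP d p x - Matrix.vecMulVec u u) *ᵥ y)
        = (∑ i, lam i * y i ^ 2) - (∑ i, u i * y i) ^ 2 := by
    intro y
    rw [Matrix.sub_mulVec, dotProduct_sub, quad_vmv]
    congr 1
    simp only [lamP]
    rw [quad_diag]
  have quadB : ∀ y : Fin d → ℝ,
      y ⬝ᵥ (((1 : Matrix (Fin d) (Fin d) ℝ)
          - (∑ i, x i ^ 2)⁻¹ • Matrix.vecMulVec x x) *ᵥ y)
        = (∑ i, y i ^ 2) - (∑ i, x i * y i) ^ 2 / (∑ i, x i ^ 2) := by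
    intro y
    rw [Matrix.sub_mulVec, dotProduct_sub, Matrix.one_mulVec, hself,
      Matrix.smul_mulVec, dotProduct_smul, quad_vmv, smul_eq_mul,
      div_eq_mul_inv, mul_comm]
  constructor
  · refine Matrix.PosSemidef.of_dotProduct_mulVec_nonneg (hermA.sub (herm_smul _ hermB)) fun y => ?_
    rw [star_trivial, Matrix.sub_mulVec, dotProduct_sub, Matrix.smul_mulVec,
      dotProduct_smul, smul_eq_mul, quad, quadB]
    have := core_ineq lam u x N c hN hlam hrel huv hV hc1 y
    linarith
  · refine Matrix.PosSemidef.of_dotProduct_mulVec_nonneg hermA fun y => ?_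
    rw [star_trivial, quad]
    have := core_ineq lam u x N 0 hN hlam hrel huv hV (by norm_num) y
    simpa using this
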